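/- Let E be a finite set, p : E → [0,1], and f : 2^E → ℝ a nonnegative, monotone, submodular set function. Then the set function g defined on subsets A ⊆ E by g(A) = ∑_{B ⊆ A} f(B) · ∏_{e∈B} p(e) · ∏_{e∈A∖B} (1 − p(e)) is nonnegative, monotone, and submodular on 2^E. -/

import Mathlib

open scoped Classical
noncomputable section

/-- The multilinear-type expectation `g(A) = ∑_{B ⊆ A} f(B) ∏_{e∈B} p e ∏_{e∈A∖B} (1 - p e)`. -/
def gval {E : Type*} (p : E → ℝ) (f : Finset E → ℝ) (A : Finset E) : ℝ :=
  ∑ B ∈ A.powerset, f B * (∏ e ∈ B, p e) * ∏ e ∈ A \ B, (1 - p e)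

lemma gval_nonneg_of {E : Type*} (p : E → ℝ) (hp : ∀ e, 0 ≤ p e ∧ p e ≤ 1)
    (f : Finset E → ℝ) (hf : ∀ B, 0 ≤ f B) (A : Finset E) : 0 ≤ gval p f A := by
  refine Finset.sum_nonneg fun B _ => ?_
  have h1 : 0 ≤ ∏ e ∈ B, p e := Finset.prod_nonneg fun e _ => (hp e).1
  have h2 : 0 ≤ ∏ e ∈ A \ B, (1 - p e) :=
    Finset.prod_nonneg fun e _ => by linarith [(hp e).2]
  exact mul_nonneg (mul_nonneg (hf B) h1) h2

lemma gval_neg {E : Type*} (p : E → ℝ) (f : Finset E → ℝ) (A : Finset E) :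
    gval p (fun B => -f B) A = -gval p f A := by
  simp [gval, neg_mul, Finset.sum_neg_distrib]

lemma gval_insert {E : Type*} (p : E → ℝ) (f : Finset E → ℝ) {A : Finset E} {a : E}
    (ha : a ∉ A) :
    gval p f (insert a A) =
      gval p f A + p a * gval p (fun B => f (insert a B) - f B) A := by
  unfold gval
  rw [Finset.sum_powerset_insert ha]
  have key : ∀ B ∈ A.powerset,
      f B * (∏ e ∈ B, p e) * ∏ e ∈ insert a A \ B, (1 - p e)
        + f (insert a B) * (∏ e ∈ insert a B, p e) * ∏ e ∈ insert a A \ insert a B, (1 - p e)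
      = f B * (∏ e ∈ B, p e) * ∏ e ∈ A \ B, (1 - p e)
        + p a * ((f (insert a B) - f B) * (∏ e ∈ B, p e) * ∏ e ∈ A \ B, (1 - p e)) := by
    intro B hB
    have hBA : B ⊆ A := Finset.mem_powerset.mp hB
    have haB : a ∉ B := fun h => ha (hBA h)
    have h1 : insert a A \ B = insert a (A \ B) := Finset.insert_sdiff_of_notMem A haB
    have h2 : insert a A \ insert a B = A \ B := by
      ext x
      simp only [Finset.mem_sdiff, Finset.mem_insert]
      constructor
      · rintro ⟨hx1 | hx1, hx2⟩
        · exact absurd (Or.inl hx1) hx2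
        · exact ⟨hx1, fun h => hx2 (Or.inr h)⟩
      · rintro ⟨hx1, hx2⟩
        exact ⟨Or.inr hx1, fun h => h.elim (fun he => ha (he ▸ hx1)) hx2⟩
    have haAB : a ∉ A \ B := fun h => ha (Finset.mem_sdiff.mp h).1
    rw [h1, h2, Finset.prod_insert haAB, Finset.prod_insert haB]
    ring
  rw [← Finset.sum_add_distrib, Finset.sum_congr rfl key, Finset.sum_add_distrib, Finset.mul_sum]

lemma gval_mono_of {E : Type*} (p : E → ℝ) (hp : ∀ e, 0 ≤ p e ∧ p e ≤ 1)
    (f : Finset E → ℝ) (hm : ∀ (a : E) (B : Finset E), f B ≤ f (insert a B)) :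
    ∀ A A' : Finset E, A ⊆ A' → gval p f A ≤ gval p f A' := by
  have step : ∀ (a : E) (A : Finset E), gval p f A ≤ gval p f (insert a A) := by
    intro a A
    by_cases ha : a ∈ A
    · rw [Finset.insert_eq_self.mpr ha]
    · rw [gval_insert p f ha]
      have h1 : 0 ≤ gval p (fun B => f (insert a B) - f B) A :=
        gval_nonneg_of p hp _ (fun B => by linarith [hm a B]) A
      nlinarith [(hp a).1]
  intro A A' hAA
  have main : ∀ S : Finset E, gval p f A ≤ gval p f (A ∪ S) := by
    intro S
    induction S using Finset.induction_on with
    | empty => simp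
    | insert _ _ hb ih =>
      rename_i b S'
      calc gval p f A ≤ gval p f (A ∪ S') := ih
        _ ≤ gval p f (insert b (A ∪ S')) := step b _
        _ = gval p f (A ∪ insert b S') := by rw [Finset.union_insert]
  have := main (A' \ A)
  rwa [Finset.union_sdiff_of_subset hAA] at this

/-- if `f` is nonnegative, monotone and submodular, so is its independent
random-subset expectation `g`. -/
theorem gval_nonneg_monotone_submodular
    {E : Type*} [Fintype E] (p : E → ℝ) (hp : ∀ e, 0 ≤ p e ∧ p e ≤ 1)
    (f : Finset E → ℝ)
    (hf0 : ∀ B, 0 ≤ f B)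
    (hfmono : ∀ B B' : Finset E, B ⊆ B' → f B ≤ f B')
    (hfsub : ∀ B B' : Finset E, B ⊆ B' → ∀ a ∉ B',
      f (insert a B') - f B' ≤ f (insert a B) - f B) :
    (∀ A : Finset E, 0 ≤ gval p f A) ∧
    (∀ A A' : Finset E, A ⊆ A' → gval p f A ≤ gval p f A') ∧
    (∀ A A' : Finset E, A ⊆ A' → ∀ a ∉ A',
      gval p f (insert a A') - gval p f A' ≤
        gval p f (insert a A) - gval p f A) := by
  refine ⟨fun A => gval_nonneg_of p hp f hf0 A, ?_, ?_⟩
  · exact gval_mono_of p hp f (fun a B => hfmono _ _ (Finset.subset_insert a B))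
  · intro A A' hAA a ha
    have haA : a ∉ A := fun h => ha (hAA h)
    rw [gval_insert p f ha, gval_insert p f haA]
    set Δ : Finset E → ℝ := fun B => f (insert a B) - f B with hΔ
    have hanti : gval p Δ A' ≤ gval p Δ A := by
      have hmono : ∀ (b : E) (B : Finset E), (fun B => -Δ B) B ≤ (fun B => -Δ B) (insert b B) := by
        intro b B
        simp only [hΔ, neg_sub]
        by_cases hab : a ∈ insert b B
        · rw [Finset.insert_eq_self.mpr hab]
          linarith [hfmono B (insert a B) (Finset.subset_insert a B)]
        · linarith [hfsub B (insert b B) (Finset.subset_insert b B) a hab]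
      have := gval_mono_of p hp (fun B => -Δ B) hmono A A' hAA
      rw [gval_neg, gval_neg] at this
      linarith
    have hpa := (hp a).1
    nlinarith
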